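/- Let p : Fin 8 → {0,1} be the bits of a plaintext byte p_n = Σ_{i=0}^{7} p(i)·2^i, let w, w̃ : Fin 8 → {1,−1} be the corresponding weight values, and let the ciphertext byte be p'_n = Σ_{i=0}^{7} E(p(i), w(i), w̃(i))·2^i. Then p_n XOR p'_n = Σ_{i=0}^{7} (1 − w'(i))·2^i, where w'(i) = (w(i)+1)/2 and XOR denotes bitwise exclusive-or of natural numbers. In particular, the XOR of a plaintext byte with its ciphertext byte equals a keystream byte η_n that depends only on the weights, not on the plaintext. -/
import Mathlib

/-- The threshold function: `f x = 1` if `x ≥ 0`, `0` otherwise. -/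
noncomputable def f (x : ℝ) : ℕ := if 0 ≤ x then 1 else 0

/-- The bit `(w+1)/2` derived from a weight `w ∈ {1, -1}`, as a natural number. -/
noncomputable def wbit (w : ℝ) : ℕ := ⌊(w + 1) / 2⌋.toNat

/-- Encryption of a bit `p` with weights `w, w̃ ∈ {1,-1}`:
`E p w w̃ = f (p·w + c·w̃ - θ)` if `w = 1`, `f (p·w - c·w̃ + θ)` otherwise,
where `c = -w/2` and `θ = ((w+1)/2) XOR ((w̃+1)/2)` (XOR of bits, cast to ℝ). -/
noncomputable def E (p : ℕ) (w wt : ℝ) : ℕ :=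
  if w = 1 then
    f ((p : ℝ) * w + (-w / 2) * wt - ((wbit w ^^^ wbit wt : ℕ) : ℝ))
  else
    f ((p : ℝ) * w - (-w / 2) * wt + ((wbit w ^^^ wbit wt : ℕ) : ℝ))

lemma wbit_one : wbit 1 = 1 := by norm_num [wbit]

lemma wbit_neg_one : wbit (-1) = 0 := by norm_num [wbit]

lemma E_eq (p : ℕ) (hp : p = 0 ∨ p = 1) (w wt : ℝ)
    (hw : w = 1 ∨ w = -1) (hwt : wt = 1 ∨ wt = -1) :
    E p w wt = p ^^^ (1 - wbit w) := by
  rcases hp with rfl | rfl <;> rcases hw with rfl | rfl <;> rcases hwt with rfl | rfl <;>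
    norm_num [E, f, wbit_one, wbit_neg_one]

lemma bit_eq (a s : ℕ) (ha : a = 0 ∨ a = 1) : a + 2 * s = Nat.bit (a = 1) s := by
  rcases ha with rfl | rfl <;> simp [Nat.bit] <;> omega

lemma sum_xor : ∀ (n : ℕ) (a b : Fin n → ℕ), (∀ i, a i = 0 ∨ a i = 1) →
    (∀ i, b i = 0 ∨ b i = 1) →
    (∑ i : Fin n, a i * 2 ^ (i : ℕ)) ^^^ (∑ i : Fin n, b i * 2 ^ (i : ℕ)) =
    ∑ i : Fin n, (a i ^^^ b i) * 2 ^ (i : ℕ)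
  | 0, a, b, _, _ => by simp
  | n + 1, a, b, ha, hb => by
    have key : ∀ c : Fin (n+1) → ℕ, (∑ i : Fin (n+1), c i * 2 ^ (i : ℕ)) =
        c 0 + 2 * ∑ i : Fin n, c i.succ * 2 ^ (i : ℕ) := by
      intro c
      rw [Fin.sum_univ_succ, Finset.mul_sum]
      simp only [Fin.val_succ, Fin.val_zero, pow_succ, pow_zero, mul_one]; congr 1; apply Finset.sum_congr rfl; intros; ring
    rw [key a, key b, key fun i => a i ^^^ b i,
      bit_eq _ _ (ha 0), bit_eq _ _ (hb 0),
      bit_eq _ _ (by rcases ha 0 with h | h <;> rcases hb 0 with h' | h' <;> simp [h, h']),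
      Nat.xor_bit, sum_xor n _ _ (fun i => ha i.succ) (fun i => hb i.succ)]
    congr 1
    rcases ha 0 with h | h <;> rcases hb 0 with h' | h' <;> simp [h, h']

theorem stmt_8 (p : Fin 8 → ℕ) (hp : ∀ i, p i = 0 ∨ p i = 1)
    (w wt : Fin 8 → ℝ)
    (hw : ∀ i, w i = 1 ∨ w i = -1) (hwt : ∀ i, wt i = 1 ∨ wt i = -1) :
    (∑ i : Fin 8, p i * 2 ^ (i : ℕ)) ^^^
      (∑ i : Fin 8, E (p i) (w i) (wt i) * 2 ^ (i : ℕ)) =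
    ∑ i : Fin 8, (1 - wbit (w i)) * 2 ^ (i : ℕ) := by
  have hwb : ∀ i, 1 - wbit (w i) = 0 ∨ 1 - wbit (w i) = 1 := by
    intro i; rcases hw i with h | h <;> simp [h, wbit_one, wbit_neg_one]
  have : ∀ i : Fin 8, E (p i) (w i) (wt i) = p i ^^^ (1 - wbit (w i)) := fun i =>
    E_eq _ (hp i) _ _ (hw i) (hwt i)
  simp only [this]
  rw [sum_xor 8 p _ hp (by
    intro i; rcases hp i with h | h <;> rcases hwb i with h' | h' <;> simp [h, h'])]
  congr 1; ext i
  rcases hp i with h | h <;> rcases hwb i with h' | h' <;> simp [h, h']
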